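/- Let G be a finite simple graph with nonempty edge set, its edges listed in a fixed order e_1, …, e_n, with each e_j = {v_j, w_j} given a chosen source v_j and target w_j. Construct the p-graph F over observation space Y = V(G) and action space U = {emit_0, emit_1, emit_2} as follows: for each j, add action vertices i_j, s_j, t_j and observation vertices oi_j, os_j, ot_j; add edges i_j → oi_j labeled {emit_0}, s_j → os_j labeled {emit_1}, t_j → ot_j labeled {emit_2}; add edges oi_j → s_j labeled {v_j} and oi_j → t_j labeled {w_j}; for each j < n add edges os_j → i_{j+1} and ot_j → i_{j+1}, each labeled {v_j, w_j}; and let i_1 be the single initial state. Then G admits a proper 3-coloring if and only if there exist a set K with |K| ≤ 3 and an observation map h_y: V(G) → P(K)∖{∅} that is non-destructive on F. -/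

import Mathlib

/-! Formalization of interaction languages and procrustean graphs (p-graphs). -/

section InteractionLanguages

variable {U Y U' Y' : Type}

/-- A list of events (events are `U ⊕ Y`: actions on the left, observations on the
right) alternates kinds, the first element being an action iff `b = true`. -/
def AltFrom : Bool → List (U ⊕ Y) → Prop
  | _, [] => True
  | b, e :: s => e.isLeft = b ∧ AltFrom (!b) s

/-- A set of event sequences is prefix-closed. -/
def PrefixClosed (L : Set (List (U ⊕ Y))) : Prop :=
  ∀ s ∈ L, ∀ t : List (U ⊕ Y), t <+: s → t ∈ L

/-- An action-first language: all members alternate starting with an action,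
i.e. the language is a subset of (UY)*(U+ε). -/
def IsActionFirst (L : Set (List (U ⊕ Y))) : Prop := ∀ s ∈ L, AltFrom true s

/-- An observation-first language: subset of (YU)*(Y+ε). -/
def IsObservationFirst (L : Set (List (U ⊕ Y))) : Prop := ∀ s ∈ L, AltFrom false s

/-- An interaction language over the event space `U ⊕ Y`. -/
def IsInteractionLang (L : Set (List (U ⊕ Y))) : Prop :=
  PrefixClosed L ∧ (IsActionFirst L ∨ IsObservationFirst L)

/-- Two languages are akin when both are action-first or both are observation-first. -/
def Akin (LA LB : Set (List (U ⊕ Y))) : Prop :=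
  (IsActionFirst LA ∧ IsActionFirst LB) ∨ (IsObservationFirst LA ∧ IsObservationFirst LB)

/-- The last element of the sequence is an action. -/
def ActionTerminal (s : List (U ⊕ Y)) : Prop := ∃ u : U, s.getLast? = some (Sum.inl u)

/-- The last element of the sequence is an observation. -/
def ObservationTerminal (s : List (U ⊕ Y)) : Prop := ∃ y : Y, s.getLast? = some (Sum.inr y)

/-- `LA` is safe on `LB`. -/
def SafeLang (LA LB : Set (List (U ⊕ Y))) : Prop :=
  ∀ s ∈ LA ∩ LB,
    (ObservationTerminal s → ∀ e : U ⊕ Y, s ++ [e] ∈ LA → s ++ [e] ∈ LB) ∧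
    (ActionTerminal s → ∀ e : U ⊕ Y, s ++ [e] ∈ LB → s ++ [e] ∈ LA)

/-- `LA` is finite on `LB`: the lengths of joint sequences are bounded. -/
def FiniteOn (LA LB : Set (List (U ⊕ Y))) : Prop :=
  ∃ k : ℕ, ∀ s ∈ LA ∩ LB, s.length ≤ k

end InteractionLanguages

/-- A procrustean graph (p-graph) over action space `U` and observation space `Y`:
a finite edge-labeled bipartite directed graph; `label v w` is the set of events
labeling the edge from `v` to `w` (the empty set meaning there is no such edge). -/
structure PGraph (U Y : Type) where
  /-- The (finite) vertex type. -/
  V : Type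
  /-- The vertex set is finite. -/
  [finV : Fintype V]
  /-- `true` on action vertices, `false` on observation vertices. -/
  isAct : V → Bool
  /-- Edge labels. -/
  label : V → V → Set (U ⊕ Y)
  /-- Edges from action vertices are labeled by actions and lead to observation vertices. -/
  act_ok : ∀ v w : V, ∀ e ∈ label v w, isAct v = true → e.isLeft = true ∧ isAct w = false
  /-- Edges from observation vertices are labeled by observations and lead to action vertices. -/
  obs_ok : ∀ v w : V, ∀ e ∈ label v w, isAct v = false → e.isRight = true ∧ isAct w = true
  /-- The set of initial states. -/
  V0 : Set V
  V0_nonempty : V0.Nonempty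
  /-- Whether the initial states are action vertices. -/
  startAct : Bool
  /-- Initial states are exclusively action states or exclusively observation states. -/
  V0_uniform : ∀ v ∈ V0, isAct v = startAct

attribute [instance] PGraph.finV

namespace PGraph

variable {U Y U' Y' : Type}

/-- The event sequence `s` transitions in `G` from `v` to `w`. -/
inductive Trans (G : PGraph U Y) : G.V → List (U ⊕ Y) → G.V → Prop
  | nil (v : G.V) : Trans G v [] v
  | cons {v w x : G.V} {e : U ⊕ Y} {s : List (U ⊕ Y)} :
      e ∈ G.label v w → Trans G w s x → Trans G v (e :: s) x

/-- The induced language of a p-graph: the set of its executions. -/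
def lang (G : PGraph U Y) : Set (List (U ⊕ Y)) :=
  {s | ∃ v ∈ G.V0, ∃ w, G.Trans v s w}

/-- A vertex reached by some execution. -/
def Reached (G : PGraph U Y) (w : G.V) : Prop :=
  ∃ s : List (U ⊕ Y), ∃ v ∈ G.V0, G.Trans v s w

/-- A p-graph is in state-determined presentation: a unique initial state and,
at every vertex, labels of distinct outgoing edges pairwise disjoint. -/
def StateDetermined (G : PGraph U Y) : Prop :=
  (∃ v : G.V, G.V0 = {v}) ∧
  ∀ v w w' : G.V, w ≠ w' → G.label v w ∩ G.label v w' = ∅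

/-- A p-graph is single-outputting: every action vertex reached by some execution
has at most one outgoing edge, and that edge's label is a singleton (action) set. -/
def SingleOutputting (G : PGraph U Y) : Prop :=
  ∀ v : G.V, G.isAct v = true → G.Reached v →
    (∀ w w' : G.V, (G.label v w).Nonempty → (G.label v w').Nonempty → w = w') ∧
    (∀ w : G.V, (G.label v w).Nonempty → ∃ u : U, G.label v w = {Sum.inl u})

/-- A deterministic filter: every observation-terminal sequence of the induced
language has at most one successor in the language. -/
def DeterministicFilter (F : PGraph U Y) : Prop :=
  ∀ s ∈ F.lang, ObservationTerminal s →
    ∀ e e' : U ⊕ Y, s ++ [e] ∈ F.lang → s ++ [e'] ∈ F.lang → e = e'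

/-- `IsTrace G v s l`: starting at `v`, the event sequence `s` can be traced along
the sequence of vertices `l` (which begins with `v`). -/
inductive IsTrace (G : PGraph U Y) : G.V → List (U ⊕ Y) → List G.V → Prop
  | nil (v : G.V) : IsTrace G v [] [v]
  | cons {v w : G.V} {e : U ⊕ Y} {s : List (U ⊕ Y)} {l : List G.V} :
      e ∈ G.label v w → IsTrace G w s l → IsTrace G v (e :: s) (v :: l)

/-- A practicable filter: a single-outputting p-graph in which the validity of every
sequence of the induced language is the consequence of exactly one sequence of
state transitions. -/
def Practicable (F : PGraph U Y) : Prop :=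
  F.SingleOutputting ∧
  ∀ s ∈ F.lang, ∃! l : List F.V, ∃ v0 ∈ F.V0, F.IsTrace v0 s l

/-- `P` is safe on `W` (as p-graphs). -/
def SafeOn (P W : PGraph U Y) : Prop := SafeLang P.lang W.lang

/-- The event sequence `s` transitions in `P` from some initial state to some vertex
of the region `T`. -/
def ReachesVia (P : PGraph U Y) (T : Set P.V) (s : List (U ⊕ Y)) : Prop :=
  ∃ v0 ∈ P.V0, ∃ v ∈ T, P.Trans v0 s v

/-- The plan `(P, Pterm)` solves the planning problem `(W, Vgoal)`. -/
def Solves (P : PGraph U Y) (Pterm : Set P.V) (W : PGraph U Y) (Vgoal : Set W.V) : Prop :=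
  Akin P.lang W.lang ∧
  FiniteOn P.lang W.lang ∧
  SafeLang P.lang W.lang ∧
  (∀ s ∈ P.lang ∩ W.lang,
    ReachesVia P Pterm s ∨ ∃ t ∈ P.lang ∩ W.lang, s <+: t ∧ ReachesVia P Pterm t) ∧
  (∀ s ∈ P.lang ∩ W.lang, ReachesVia P Pterm s →
    ∀ w0 ∈ W.V0, ∀ w : W.V, W.Trans w0 s w → w ∈ Vgoal)

/-- The relation `R ⊆ V(P) × V(W)` relating `v` and `w` when some joint-execution
transitions in `P` from an initial state to `v` and in `W` from an initial state to `w`. -/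
def HomRel (P W : PGraph U Y) (v : P.V) (w : W.V) : Prop :=
  ∃ s ∈ P.lang ∩ W.lang, (∃ v0 ∈ P.V0, P.Trans v0 s v) ∧ (∃ w0 ∈ W.V0, W.Trans w0 s w)

/-- A homomorphic solution: a solution for which the relation `HomRel` is a function. -/
def HomomorphicSolution (P : PGraph U Y) (Pterm : Set P.V) (W : PGraph U Y)
    (Vgoal : Set W.V) : Prop :=
  Solves P Pterm W Vgoal ∧
  ∀ (v : P.V) (w w' : W.V), HomRel P W v w → HomRel P W v w' → w = w'

/-- The union `P ⊎ Q` of two p-graphs (whose initial states are of matching kind). -/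
def union (P Q : PGraph U Y) (h : P.startAct = Q.startAct) : PGraph U Y where
  V := P.V ⊕ Q.V
  isAct := Sum.elim P.isAct Q.isAct
  label := fun v w =>
    match v, w with
    | Sum.inl a, Sum.inl b => P.label a b
    | Sum.inr a, Sum.inr b => Q.label a b
    | _, _ => ∅
  act_ok := by
    rintro (a | a) (b | b) e he hv
    · exact P.act_ok a b e he hv
    · exact absurd he (Set.notMem_empty e)
    · exact absurd he (Set.notMem_empty e)
    · exact Q.act_ok a b e he hv
  obs_ok := by
    rintro (a | a) (b | b) e he hv
    · exact P.obs_ok a b e he hv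
    · exact absurd he (Set.notMem_empty e)
    · exact absurd he (Set.notMem_empty e)
    · exact Q.obs_ok a b e he hv
  V0 := Sum.inl '' P.V0 ∪ Sum.inr '' Q.V0
  V0_nonempty := by
    obtain ⟨v, hv⟩ := P.V0_nonempty
    exact ⟨Sum.inl v, Or.inl ⟨v, hv, rfl⟩⟩
  startAct := P.startAct
  V0_uniform := by
    rintro v (⟨a, ha, rfl⟩ | ⟨a, ha, rfl⟩)
    · exact P.V0_uniform a ha
    · exact (Q.V0_uniform a ha).trans h.symm

/-- The set of states reached in `P` from some initial state by the event sequence `s`. -/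
def reachSet (P : PGraph U Y) (s : List (U ⊕ Y)) : Set P.V :=
  {w | ∃ v0 ∈ P.V0, P.Trans v0 s w}

lemma trans_nil_eq {P : PGraph U Y} {v w : P.V} (h : P.Trans v [] w) : w = v := by
  cases h; rfl

lemma edge_flips {P : PGraph U Y} {v w : P.V} {e : U ⊕ Y} (he : e ∈ P.label v w) :
    P.isAct w = !P.isAct v := by
  cases hv : P.isAct v
  · simpa using (P.obs_ok v w e he hv).2
  · simpa using (P.act_ok v w e he hv).2

lemma trans_parity {P : PGraph U Y} {v w : P.V} {s : List (U ⊕ Y)}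
    (h : P.Trans v s w) : P.isAct w = Bool.xor (P.isAct v) (decide (s.length % 2 = 1)) := by
  induction h with
  | nil v => simp
  | cons he _ ih =>
    rename_i v' w' x' e s' _
    rw [ih, edge_flips he]
    rcases Nat.even_or_odd s'.length with hp | hp <;>
      rcases hb : P.isAct v' <;>
      simp_all [Nat.even_iff, Nat.odd_iff, List.length_cons, Nat.succ_mod_two_eq_one_iff,
        Nat.succ_mod_two_eq_zero_iff]
  
lemma reachSet_homog {P : PGraph U Y} {s : List (U ⊕ Y)} {v w : P.V}
    (hv : v ∈ P.reachSet s) (hw : w ∈ P.reachSet s) : P.isAct v = P.isAct w := by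
  obtain ⟨v0, hv0, hv⟩ := hv
  obtain ⟨w0, hw0, hw⟩ := hw
  rw [trans_parity hv, trans_parity hw, P.V0_uniform v0 hv0, P.V0_uniform w0 hw0]

lemma trans_append {P : PGraph U Y} {v x : P.V} {s t : List (U ⊕ Y)}
    (h : P.Trans v (s ++ t) x) : ∃ m : P.V, P.Trans v s m ∧ P.Trans m t x := by
  induction s generalizing v with
  | nil => exact ⟨v, Trans.nil v, h⟩
  | cons e s ih =>
    cases h with
    | cons he h' =>
      obtain ⟨m, h1, h2⟩ := ih h'
      exact ⟨m, Trans.cons he h1, h2⟩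

lemma trans_single {P : PGraph U Y} {v x : P.V} {e : U ⊕ Y}
    (h : P.Trans v [e] x) : e ∈ P.label v x := by
  cases h with
  | cons he h' =>
    rw [trans_nil_eq h']
    exact he

/-- The powerset determinization of a p-graph `P`: vertices are the subsets of
`V(P)` of the form `S(s) = reachSet P s` for `s ∈ L(P)`, the single initial state is
`S(ε) = V0(P)`, and the label of the edge from `S` to `T` contains `e` exactly when
`S = S(s)`, `T = S(s·e)` for some `s` with `s, s·e ∈ L(P)`. -/
noncomputable def determinize (P : PGraph U Y) : PGraph U Y where
  V := {S : Set P.V // ∃ s ∈ P.lang, P.reachSet s = S}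
  finV := Fintype.ofFinite _
  isAct := fun S => by classical exact decide (∃ v ∈ S.1, P.isAct v = true)
  label := fun S T =>
    {e | ∃ s ∈ P.lang, P.reachSet s = S.1 ∧ s ++ [e] ∈ P.lang ∧ P.reachSet (s ++ [e]) = T.1}
  act_ok := by
    classical
    rintro S T e ⟨s, hs, hS, hse, hT⟩ hv
    rw [decide_eq_true_iff] at hv
    obtain ⟨v, hvS, hvAct⟩ := hv
    obtain ⟨v0, hv0, x, hx⟩ := hse
    obtain ⟨m, hm, hmx⟩ := trans_append hx
    have hmS : m ∈ P.reachSet s := ⟨v0, hv0, hm⟩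
    have hedge : e ∈ P.label m x := trans_single hmx
    have hmAct : P.isAct m = true := by
      rw [← hS] at hvS
      rw [reachSet_homog hmS hvS, hvAct]
    obtain ⟨hL, hxA⟩ := P.act_ok m x e hedge hmAct
    refine ⟨hL, ?_⟩
    rw [decide_eq_false_iff_not]
    rintro ⟨w, hwT, hwAct⟩
    rw [← hT] at hwT
    have hxT : x ∈ P.reachSet (s ++ [e]) := ⟨v0, hv0, hx⟩
    rw [reachSet_homog hwT hxT, hxA] at hwAct
    exact Bool.false_ne_true hwAct
  obs_ok := by
    classical
    rintro S T e ⟨s, hs, hS, hse, hT⟩ hv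
    rw [decide_eq_false_iff_not] at hv
    obtain ⟨v0, hv0, x, hx⟩ := hse
    obtain ⟨m, hm, hmx⟩ := trans_append hx
    have hmS : m ∈ P.reachSet s := ⟨v0, hv0, hm⟩
    have hedge : e ∈ P.label m x := trans_single hmx
    have hmObs : P.isAct m = false := by
      rcases hma : P.isAct m with _ | _
      · rfl
      · exact absurd ⟨m, by rwa [hS] at hmS, hma⟩ hv
    obtain ⟨hR, hxA⟩ := P.obs_ok m x e hedge hmObs
    refine ⟨hR, ?_⟩
    rw [decide_eq_true_iff]
    refine ⟨x, ?_, hxA⟩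
    rw [← hT]
    exact ⟨v0, hv0, hx⟩
  V0 := {⟨P.reachSet [],
    ⟨[], ⟨P.V0_nonempty.choose, P.V0_nonempty.choose_spec,
      P.V0_nonempty.choose, Trans.nil _⟩, rfl⟩⟩}
  V0_nonempty := ⟨_, rfl⟩
  startAct := P.startAct
  V0_uniform := by
    classical
    rintro S hS
    rw [Set.mem_singleton_iff] at hS
    subst hS
    rcases hsa : P.startAct with _ | _
    · rw [decide_eq_false_iff_not]
      rintro ⟨v, ⟨v0, hv0, hv⟩, hvAct⟩
      rw [trans_nil_eq hv] at hvAct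
      rw [P.V0_uniform v0 hv0, hsa] at hvAct
      exact Bool.false_ne_true hvAct
    · rw [decide_eq_true_iff]
      obtain ⟨v, hv⟩ := P.V0_nonempty
      exact ⟨v, ⟨v, hv, Trans.nil v⟩, by rw [P.V0_uniform v hv, hsa]⟩

end PGraph
section Maps

variable {U Y U' Y' : Type}

/-- A label map: an action map together with an observation map, each assigning a
nonempty set of new events to each event. -/
structure LabelMap (U Y U' Y' : Type) where
  actMap : U → Set U'
  obsMap : Y → Set Y'
  actMap_nonempty : ∀ u : U, (actMap u).Nonempty
  obsMap_nonempty : ∀ y : Y, (obsMap y).Nonempty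

/-- Action of a label map on a single event. -/
def LabelMap.event (h : LabelMap U Y U' Y') : U ⊕ Y → Set (U' ⊕ Y')
  | Sum.inl u => Sum.inl '' h.actMap u
  | Sum.inr y => Sum.inr '' h.obsMap y

/-- Extension of a label map to sets of events: `h(S) = ⋃_{e ∈ S} h(e)`. -/
def LabelMap.setImage (h : LabelMap U Y U' Y') (S : Set (U ⊕ Y)) : Set (U' ⊕ Y') :=
  ⋃ e ∈ S, h.event e

/-- Extension of a label map to p-graphs: replace each edge label `S` with `h(S)`. -/
def PGraph.applyMap (h : LabelMap U Y U' Y') (G : PGraph U Y) : PGraph U' Y' where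
  V := G.V
  isAct := G.isAct
  label := fun v w => h.setImage (G.label v w)
  act_ok := by
    intro v w e' he' hv
    simp only [LabelMap.setImage, Set.mem_iUnion, exists_prop] at he'
    obtain ⟨e, he, hmem⟩ := he'
    have h1 := G.act_ok v w e he hv
    refine ⟨?_, h1.2⟩
    cases e with
    | inl u =>
      simp only [LabelMap.event] at hmem
      obtain ⟨u', _, rfl⟩ := hmem
      rfl
    | inr y => simp at h1
  obs_ok := by
    intro v w e' he' hv
    simp only [LabelMap.setImage, Set.mem_iUnion, exists_prop] at he'
    obtain ⟨e, he, hmem⟩ := he'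
    have h1 := G.obs_ok v w e he hv
    refine ⟨?_, h1.2⟩
    cases e with
    | inl u => simp at h1
    | inr y =>
      simp only [LabelMap.event] at hmem
      obtain ⟨y', _, rfl⟩ := hmem
      rfl
  V0 := G.V0
  V0_nonempty := G.V0_nonempty
  startAct := G.startAct
  V0_uniform := G.V0_uniform

/-- Action of an observation map on a single event (actions are left unchanged). -/
def obsEventImage (h : Y → Set Y') : U ⊕ Y → Set (U ⊕ Y')
  | Sum.inl u => {Sum.inl u}
  | Sum.inr y => Sum.inr '' h y

/-- `h_y(F)`: the p-graph `F` with each observation edge label `S` replaced by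
`⋃_{y ∈ S} h_y(y)` (action labels unchanged). -/
def PGraph.mapObs (G : PGraph U Y) (h : Y → Set Y') : PGraph U Y' where
  V := G.V
  isAct := G.isAct
  label := fun v w => ⋃ e ∈ G.label v w, obsEventImage h e
  act_ok := by
    intro v w e' he' hv
    simp only [Set.mem_iUnion, exists_prop] at he'
    obtain ⟨e, he, hmem⟩ := he'
    have h1 := G.act_ok v w e he hv
    refine ⟨?_, h1.2⟩
    cases e with
    | inl u =>
      simp only [obsEventImage, Set.mem_singleton_iff] at hmem
      subst hmem
      rfl
    | inr y => simp at h1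
  obs_ok := by
    intro v w e' he' hv
    simp only [Set.mem_iUnion, exists_prop] at he'
    obtain ⟨e, he, hmem⟩ := he'
    have h1 := G.obs_ok v w e he hv
    refine ⟨?_, h1.2⟩
    cases e with
    | inl u => simp at h1
    | inr y =>
      simp only [obsEventImage] at hmem
      obtain ⟨y', _, rfl⟩ := hmem
      rfl
  V0 := G.V0
  V0_nonempty := G.V0_nonempty
  startAct := G.startAct
  V0_uniform := G.V0_uniform

/-- `corrEvent h e f` holds when `f ∈ h_y(e)` for observations and `f = e` for actions. -/
def corrEvent (h : Y → Set Y') : U ⊕ Y → U ⊕ Y' → Prop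
  | Sum.inl u, Sum.inl u' => u' = u
  | Sum.inr y, Sum.inr y' => y' ∈ h y
  | _, _ => False

/-- `F` is equivalent to `F'` modulo the observation map `h`. -/
def EquivMod (F : PGraph U Y) (F' : PGraph U Y') (h : Y → Set Y') : Prop :=
  ∀ s ∈ F.lang, ObservationTerminal s →
    {u : U | s ++ [Sum.inl u] ∈ F.lang} =
      {u : U | ∃ t : List (U ⊕ Y'),
        List.Forall₂ (corrEvent h) s t ∧ t ++ [Sum.inl u] ∈ F'.lang}

/-- The observation map `h` is non-destructive on `F`. -/
def ObsNonDestructive (F : PGraph U Y) (h : Y → Set Y') : Prop :=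
  EquivMod F (F.mapObs h) h

end Maps
/-! ### The hardness construction: a filter built from a listing of graph edges -/

/-- Tags for the six vertices associated to each graph edge in the hardness
construction: action vertices `i_j`, `s_j`, `t_j` and observation vertices
`oi_j`, `os_j`, `ot_j`. -/
inductive HTag : Type
  | ti : HTag
  | ts : HTag
  | tt : HTag
  | toi : HTag
  | tos : HTag
  | tot : HTag
deriving DecidableEq

instance : Fintype HTag :=
  ⟨{HTag.ti, HTag.ts, HTag.tt, HTag.toi, HTag.tos, HTag.tot}, by intro x; cases x <;> simp⟩

/-- `i`, `s`, `t` are action vertices; `oi`, `os`, `ot` are observation vertices. -/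
def HTag.isAction : HTag → Bool
  | .ti => true
  | .ts => true
  | .tt => true
  | .toi => false
  | .tos => false
  | .tot => false

variable {Vt : Type}

/-- The edge labels of the hardness construction.  The action space is
`Fin 3 = {emit_0, emit_1, emit_2}` and the observation space is the vertex set `Vt`
of the graph being colored.  `src j`/`tgt j` are the chosen source and target of the
`j`-th graph edge. -/
def hardLabel (n : ℕ) (src tgt : Fin n → Vt) :
    Fin n × HTag → Fin n × HTag → Set (Fin 3 ⊕ Vt) := fun p q =>
  match p, q with
  | (j, HTag.ti), (k, HTag.toi) => if k = j then {Sum.inl 0} else ∅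
  | (j, HTag.ts), (k, HTag.tos) => if k = j then {Sum.inl 1} else ∅
  | (j, HTag.tt), (k, HTag.tot) => if k = j then {Sum.inl 2} else ∅
  | (j, HTag.toi), (k, HTag.ts) => if k = j then {Sum.inr (src j)} else ∅
  | (j, HTag.toi), (k, HTag.tt) => if k = j then {Sum.inr (tgt j)} else ∅
  | (j, HTag.tos), (k, HTag.ti) =>
      if (k : ℕ) = (j : ℕ) + 1 then {Sum.inr (src j), Sum.inr (tgt j)} else ∅
  | (j, HTag.tot), (k, HTag.ti) =>
      if (k : ℕ) = (j : ℕ) + 1 then {Sum.inr (src j), Sum.inr (tgt j)} else ∅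
  | _, _ => ∅

/-- The p-graph (a filter) built from the listing `e_j = {src j, tgt j}`,
`j = 1, …, n`, of the edges of a graph, with single initial state `i_1`. -/
def hardPGraph (n : ℕ) (hn : 0 < n) (src tgt : Fin n → Vt) : PGraph (Fin 3) Vt where
  V := Fin n × HTag
  isAct := fun p => p.2.isAction
  label := hardLabel n src tgt
  act_ok := by
    rintro ⟨j, a⟩ ⟨k, b⟩ e he hv
    cases a <;> cases b <;>
      simp only [hardLabel, HTag.isAction] at he hv ⊢ <;>
      first
        | exact absurd hv Bool.false_ne_true
        | exact absurd he (Set.notMem_empty e)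
        | (split at he <;>
            first
              | exact absurd he (Set.notMem_empty e)
              | (simp only [Set.mem_singleton_iff, Set.mem_insert_iff] at he
                 first
                   | (subst he; exact ⟨rfl, True.intro⟩)
                   | (rcases he with rfl | rfl <;> exact ⟨rfl, True.intro⟩)))
  obs_ok := by
    rintro ⟨j, a⟩ ⟨k, b⟩ e he hv
    cases a <;> cases b <;>
      simp only [hardLabel, HTag.isAction] at he hv ⊢ <;>
      first
        | exact absurd hv.symm Bool.false_ne_true
        | exact absurd he (Set.notMem_empty e)
        | (split at he <;>
            first
              | exact absurd he (Set.notMem_empty e)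
              | (simp only [Set.mem_singleton_iff, Set.mem_insert_iff] at he
                 first
                   | (subst he; exact ⟨rfl, True.intro⟩)
                   | (rcases he with rfl | rfl <;> exact ⟨rfl, True.intro⟩)))
  V0 := {(⟨0, hn⟩, HTag.ti)}
  V0_nonempty := ⟨_, rfl⟩
  startAct := true
  V0_uniform := by
    rintro v hv
    rw [Set.mem_singleton_iff] at hv
    subst hv
    rfl

section Lemmas
open PGraph

variable {U Y Y' : Type}

lemma trans_comp {P : PGraph U Y} {v w x : P.V} {s t : List (U ⊕ Y)}
    (h1 : P.Trans v s w) (h2 : P.Trans w t x) : P.Trans v (s ++ t) x := by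
  induction h1 with
  | nil v => exact h2
  | cons he _ ih => exact PGraph.Trans.cons he (ih h2)

lemma trans_cons_inv {P : PGraph U Y} {v w : P.V} {e : U ⊕ Y} {s : List (U ⊕ Y)}
    (h : P.Trans v (e :: s) w) : ∃ m, e ∈ P.label v m ∧ P.Trans m s w := by
  cases h with | cons he h' => exact ⟨_, he, h'⟩

lemma trans_det {P : PGraph U Y}
    (H : ∀ v w w' : P.V, ∀ e : U ⊕ Y, e ∈ P.label v w → e ∈ P.label v w' → w = w')
    {v w w' : P.V} {s : List (U ⊕ Y)}
    (h1 : P.Trans v s w) (h2 : P.Trans v s w') : w = w' := by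
  induction s generalizing v with
  | nil => rw [PGraph.trans_nil_eq h1, PGraph.trans_nil_eq h2]
  | cons e s ih =>
    obtain ⟨m1, he1, h1'⟩ := trans_cons_inv h1
    obtain ⟨m2, he2, h2'⟩ := trans_cons_inv h2
    cases H _ _ _ _ he1 he2
    exact ih h1' h2'

lemma hardLabel_disj {Vt : Type} {n : ℕ} {src tgt : Fin n → Vt}
    (hst : ∀ j, src j ≠ tgt j) :
    ∀ v w w' : Fin n × HTag, ∀ e : Fin 3 ⊕ Vt, e ∈ hardLabel n src tgt v w →
      e ∈ hardLabel n src tgt v w' → w = w' := by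
  rintro ⟨j, a⟩ ⟨k, b⟩ ⟨k', b'⟩ e h1 h2
  have := hst j
  cases a <;> cases b <;> cases b' <;>
    simp only [hardLabel] at h1 h2 <;>
    first
      | exact absurd h1 (Set.notMem_empty e)
      | exact absurd h2 (Set.notMem_empty e)
      | (split_ifs at h1 h2 <;> simp_all [Fin.ext_iff] <;> first | omega | exact absurd h2.symm (hst j) | exact absurd h1.symm (hst j))

lemma hardLabel_inl {Vt K : Type} {n : ℕ} {src tgt : Fin n → Vt} {cs ct : Fin n → K}
    {v w : Fin n × HTag} {u : Fin 3} (h : Sum.inl u ∈ hardLabel n cs ct v w) :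
    Sum.inl u ∈ hardLabel n src tgt v w := by
  obtain ⟨j, a⟩ := v
  obtain ⟨k, b⟩ := w
  cases a <;> cases b <;> simp only [hardLabel] at h ⊢ <;>
    first
      | exact absurd h (Set.notMem_empty _)
      | (split_ifs at h ⊢ <;> simp_all)

end Lemmas
section Lemmas2
open PGraph

variable {U Y Y' : Type}

lemma mem_mapObs_inl {G : PGraph U Y} {h : Y → Set Y'} {v w : G.V} {u : U}
    (hu : Sum.inl u ∈ G.label v w) : Sum.inl u ∈ (G.mapObs h).label v w :=
  Set.mem_biUnion hu (by simp [obsEventImage])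

lemma mem_mapObs_inr {G : PGraph U Y} {h : Y → Set Y'} {v w : G.V} {y : Y} {k : Y'}
    (hy : Sum.inr y ∈ G.label v w) (hk : k ∈ h y) :
    Sum.inr k ∈ (G.mapObs h).label v w :=
  Set.mem_biUnion hy ⟨k, hk, rfl⟩

lemma mapObs_inl_inv {G : PGraph U Y} {h : Y → Set Y'} {v w : G.V} {u : U}
    (hu : Sum.inl u ∈ (G.mapObs h).label v w) : Sum.inl u ∈ G.label v w := by
  simp only [PGraph.mapObs, Set.mem_iUnion, exists_prop] at hu
  obtain ⟨e, he, hm⟩ := hu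
  cases e with
  | inl u' => simp only [obsEventImage, Set.mem_singleton_iff, Sum.inl.injEq] at hm; subst hm; exact he
  | inr y => simp [obsEventImage] at hm

/-- mapObs with singleton sets turns `hardPGraph` labels into relabeled hard labels. -/
lemma mapObs_hard_label {Vt : Type} {n : ℕ} {src tgt : Fin n → Vt}
    (c : Vt → Fin 3) (v w : Fin n × HTag) :
    ((⋃ e ∈ hardLabel n src tgt v w, obsEventImage (fun y => ({c y} : Set (Fin 3))) e) :
      Set (Fin 3 ⊕ Fin 3)) =
      hardLabel n (fun j => c (src j)) (fun j => c (tgt j)) v w := by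
  obtain ⟨j, a⟩ := v
  obtain ⟨k, b⟩ := w
  cases a <;> cases b <;>
    simp only [hardLabel] <;>
    first
      | (split_ifs <;> ext e <;> simp [obsEventImage] <;> tauto)
      | simp

end Lemmas2
section Lemmas3
open PGraph

variable {U Y Y' : Type}

lemma corr_singleton_iff {c : Y → Y'} {s : List (U ⊕ Y)} {t : List (U ⊕ Y')} :
    List.Forall₂ (corrEvent (fun y => ({c y} : Set Y'))) s t ↔ t = s.map (Sum.map id c) := by
  constructor
  · intro h
    induction s generalizing t with
    | nil => cases h; rfl
    | cons e s ih =>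
      cases h with
      | cons he ht =>
        rename_i f t'
        cases e <;> cases f <;> simp only [corrEvent, Set.mem_singleton_iff] at he <;>
          first
            | exact he.elim
            | (subst he; simp [ih ht, Sum.map])
  · rintro rfl
    induction s with
    | nil => exact List.Forall₂.nil
    | cons e s ih =>
      refine List.Forall₂.cons ?_ ih
      cases e <;> simp [corrEvent, Sum.map]

lemma trans_mapObs {G : PGraph U Y} {h : Y → Set Y'} {c : Y → Y'}
    (hc : ∀ y, c y ∈ h y) {v w : G.V} {s : List (U ⊕ Y)} (ht : G.Trans v s w) :
    (G.mapObs h).Trans v (s.map (Sum.map id c)) w := by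
  induction ht with
  | nil v => exact PGraph.Trans.nil (G := G.mapObs h) v
  | cons he _ ih =>
    rename_i v' w' x' e s' _
    refine PGraph.Trans.cons ?_ ih
    cases e with
    | inl u => exact mem_mapObs_inl he
    | inr y => exact mem_mapObs_inr he (hc y)

end Lemmas3
section Forward
open PGraph

lemma hard_nondestructive {Vt : Type} (n : ℕ) (hn : 0 < n) (src tgt : Fin n → Vt)
    (c : Vt → Fin 3) (hc : ∀ j, c (src j) ≠ c (tgt j)) :
    ObsNonDestructive (hardPGraph n hn src tgt) (fun y => ({c y} : Set (Fin 3))) := by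
  set F := hardPGraph n hn src tgt with hF
  set h : Vt → Set (Fin 3) := fun y => {c y} with hh
  set F' := F.mapObs h with hF'
  have labelEq : ∀ v w : Fin n × HTag,
      F'.label v w = hardLabel n (fun j => c (src j)) (fun j => c (tgt j)) v w :=
    fun v w => mapObs_hard_label c v w
  have detF' : ∀ {v w w' : F'.V} {s : List (Fin 3 ⊕ Fin 3)},
      F'.Trans v s w → F'.Trans v s w' → w = w' := by
    intro v w w' s h1 h2
    refine trans_det ?_ h1 h2
    intro a b b' e he1 he2
    rw [labelEq a b] at he1
    rw [labelEq a b'] at he2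
    exact hardLabel_disj hc a b b' e he1 he2
  intro s hs _
  ext u
  simp only [Set.mem_setOf_eq]
  constructor
  · intro hu
    obtain ⟨v0, hv0, x, htr⟩ := hu
    refine ⟨s.map (Sum.map id c), corr_singleton_iff.mpr rfl, v0, hv0, x, ?_⟩
    have := trans_mapObs (G := F) (h := h) (c := c) (fun y => rfl) htr
    simpa using this
  · rintro ⟨t, hcorr, hu⟩
    have ht := corr_singleton_iff.mp hcorr
    subst ht
    obtain ⟨v0', hv0', x, htr'⟩ := hu
    obtain ⟨v0, hv0, w, hsw⟩ := hs
    have hv0e : v0' = v0 := by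
      have h1 : v0 = (⟨⟨0, hn⟩, HTag.ti⟩ : Fin n × HTag) := hv0
      have h2 : v0' = (⟨⟨0, hn⟩, HTag.ti⟩ : Fin n × HTag) := hv0'
      rw [h1, h2]
    subst hv0e
    obtain ⟨m, hm1, hm2⟩ := trans_append htr'
    have hmap : F'.Trans v0' (s.map (Sum.map id c)) w :=
      trans_mapObs (G := F) (h := h) (c := c) (fun y => rfl) hsw
    have hmw : m = w := detF' hm1 hmap
    rw [← hmw] at hsw
    have hlab : Sum.inl u ∈ F'.label m x := by
      have := trans_single hm2
      simpa using this
    rw [labelEq m x] at hlab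
    have hlab2 : Sum.inl u ∈ F.label m x := hardLabel_inl hlab
    exact ⟨v0', hv0, x, trans_comp hsw (PGraph.Trans.cons hlab2 (PGraph.Trans.nil (G := F) x))⟩

end Forward
section Backward
open PGraph

variable {Vt K : Type} {n : ℕ} {src tgt : Fin n → Vt}

lemma hardPGraph_label (hn : 0 < n) :
    (hardPGraph n hn src tgt).label = hardLabel n src tgt := rfl

lemma memL_i (hn : 0 < n) (j : Fin n) :
    (Sum.inl 0 : Fin 3 ⊕ Vt) ∈ (hardPGraph n hn src tgt).label (j, .ti) (j, .toi) := by
  rw [hardPGraph_label]; simp [hardLabel]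

lemma memL_oi_s (hn : 0 < n) (j : Fin n) :
    (Sum.inr (src j) : Fin 3 ⊕ Vt) ∈ (hardPGraph n hn src tgt).label (j, .toi) (j, .ts) := by
  rw [hardPGraph_label]; simp [hardLabel]

lemma memL_oi_t (hn : 0 < n) (j : Fin n) :
    (Sum.inr (tgt j) : Fin 3 ⊕ Vt) ∈ (hardPGraph n hn src tgt).label (j, .toi) (j, .tt) := by
  rw [hardPGraph_label]; simp [hardLabel]

lemma memL_s (hn : 0 < n) (j : Fin n) :
    (Sum.inl 1 : Fin 3 ⊕ Vt) ∈ (hardPGraph n hn src tgt).label (j, .ts) (j, .tos) := by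
  rw [hardPGraph_label]; simp [hardLabel]

lemma memL_t (hn : 0 < n) (j : Fin n) :
    (Sum.inl 2 : Fin 3 ⊕ Vt) ∈ (hardPGraph n hn src tgt).label (j, .tt) (j, .tot) := by
  rw [hardPGraph_label]; simp [hardLabel]

lemma memL_os (hn : 0 < n) (j k : Fin n) (hk : (k : ℕ) = (j : ℕ) + 1) :
    (Sum.inr (src j) : Fin 3 ⊕ Vt) ∈ (hardPGraph n hn src tgt).label (j, .tos) (k, .ti) := by
  rw [hardPGraph_label]; simp [hardLabel, hk]

lemma notL_ts (j : Fin n) (x : Fin n × HTag) :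
    (Sum.inl 2 : Fin 3 ⊕ Vt) ∉ hardLabel n src tgt (j, .ts) x := by
  obtain ⟨k, b⟩ := x
  cases b <;> simp [hardLabel] <;> split_ifs <;> simp_all <;> decide

/-- Joint reachability of `(j, i)` in `F` and `F'`. -/
lemma hard_reach (hn : 0 < n) (h : Vt → Set K) (d : Vt → K) (hd : ∀ y, d y ∈ h y) :
    ∀ m : ℕ, ∀ hm : m < n, ∃ (s : List (Fin 3 ⊕ Vt)) (t : List (Fin 3 ⊕ K)),
      List.Forall₂ (corrEvent h) s t ∧
      (hardPGraph n hn src tgt).Trans (⟨0, hn⟩, HTag.ti) s (⟨m, hm⟩, HTag.ti) ∧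
      ((hardPGraph n hn src tgt).mapObs h).Trans (⟨0, hn⟩, HTag.ti) t (⟨m, hm⟩, HTag.ti) := by
  intro m
  induction m with
  | zero =>
    intro hm
    exact ⟨[], [], List.Forall₂.nil, PGraph.Trans.nil _, PGraph.Trans.nil _⟩
  | succ m ih =>
    intro hm
    have hm' : m < n := Nat.lt_of_succ_lt hm
    obtain ⟨s, t, hcorr, hs, ht⟩ := ih hm'
    set F := hardPGraph n hn src tgt
    set j : Fin n := ⟨m, hm'⟩
    refine ⟨s ++ [Sum.inl 0, Sum.inr (src j), Sum.inl 1, Sum.inr (src j)],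
      t ++ [Sum.inl 0, Sum.inr (d (src j)), Sum.inl 1, Sum.inr (d (src j))], ?_, ?_, ?_⟩
    · refine List.rel_append hcorr ?_
      refine List.Forall₂.cons rfl (List.Forall₂.cons (hd _)
        (List.Forall₂.cons rfl (List.Forall₂.cons (hd _) List.Forall₂.nil)))
    · refine trans_comp hs ?_
      exact PGraph.Trans.cons (memL_i hn j) (PGraph.Trans.cons (memL_oi_s hn j)
        (PGraph.Trans.cons (memL_s hn j) (PGraph.Trans.cons (memL_os hn j ⟨m+1, hm⟩ rfl)
          (PGraph.Trans.nil (G := F) _))))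
    · refine trans_comp ht ?_
      exact PGraph.Trans.cons (mem_mapObs_inl (memL_i hn j))
        (PGraph.Trans.cons (mem_mapObs_inr (memL_oi_s hn j) (hd _))
          (PGraph.Trans.cons (mem_mapObs_inl (memL_s hn j))
            (PGraph.Trans.cons (mem_mapObs_inr (memL_os hn j ⟨m+1, hm⟩ rfl) (hd _))
              (PGraph.Trans.nil (G := F.mapObs h) _))))

end Backward
section Final
open PGraph

lemma hard_disjoint {Vt K : Type} {n : ℕ} {src tgt : Fin n → Vt} (hn : 0 < n)
    (hst : ∀ j, src j ≠ tgt j) (h : Vt → Set K) (hne : ∀ y, (h y).Nonempty)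
    (hnd : ObsNonDestructive (hardPGraph n hn src tgt) h)
    (j : Fin n) (k : K) (hk1 : k ∈ h (src j)) (hk2 : k ∈ h (tgt j)) : False := by
  classical
  set F := hardPGraph n hn src tgt with hFdef
  choose d hd using hne
  obtain ⟨s, t, hcorr, hs, ht⟩ := hard_reach (src := src) (tgt := tgt) hn h d hd j.1 j.2
  simp only [Fin.eta] at hs ht
  set v0 : F.V := (⟨0, hn⟩, HTag.ti) with hv0def
  have hs1 : F.Trans v0 ((s ++ [Sum.inl 0]) ++ [Sum.inr (src j)]) (j, HTag.ts) :=
    trans_comp (trans_comp hs (PGraph.Trans.cons (memL_i hn j) (PGraph.Trans.nil (G := F) _)))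
      (PGraph.Trans.cons (memL_oi_s hn j) (PGraph.Trans.nil (G := F) _))
  have hv0 : v0 ∈ F.V0 := rfl
  have hs1L : (s ++ [Sum.inl 0]) ++ [Sum.inr (src j)] ∈ F.lang := ⟨v0, hv0, _, hs1⟩
  have hterm : ObservationTerminal ((s ++ [Sum.inl 0]) ++ [Sum.inr (src j)]) :=
    ⟨src j, List.getLast?_concat⟩
  have heq := hnd _ hs1L hterm
  have h2 : (2 : Fin 3) ∈ {u : Fin 3 | ∃ t' : List (Fin 3 ⊕ K),
      List.Forall₂ (corrEvent h) ((s ++ [Sum.inl 0]) ++ [Sum.inr (src j)]) t' ∧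
      t' ++ [Sum.inl u] ∈ (F.mapObs h).lang} := by
    refine ⟨(t ++ [Sum.inl 0]) ++ [Sum.inr k], ?_, ?_⟩
    · exact List.rel_append (List.rel_append hcorr
        (List.Forall₂.cons (show corrEvent h (Sum.inl (0 : Fin 3)) (Sum.inl 0) from rfl) List.Forall₂.nil))
        (List.Forall₂.cons hk1 List.Forall₂.nil)
    · have chain : (F.mapObs h).Trans v0
          (t ++ [Sum.inl 0, Sum.inr k, Sum.inl 2]) (j, HTag.tot) :=
        trans_comp ht (PGraph.Trans.cons (mem_mapObs_inl (memL_i hn j))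
          (PGraph.Trans.cons (mem_mapObs_inr (memL_oi_t hn j) hk2)
            (PGraph.Trans.cons (mem_mapObs_inl (memL_t hn j))
              (PGraph.Trans.nil (G := F.mapObs h) _))))
      have hl : ((t ++ [Sum.inl 0]) ++ [Sum.inr k]) ++ [Sum.inl (2 : Fin 3)] =
          t ++ [Sum.inl 0, Sum.inr k, Sum.inl 2] := by simp
      rw [hl]
      exact ⟨v0, hv0, _, chain⟩
  rw [← heq] at h2
  obtain ⟨w0, hw0, x, htr⟩ := h2
  have hw0e : w0 = v0 := hw0
  subst hw0e
  obtain ⟨m, hm1, hm2⟩ := trans_append htr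
  have detF : m = (j, HTag.ts) := by
    refine trans_det ?_ hm1 hs1
    intro a b b' e he1 he2
    rw [hardPGraph_label] at he1 he2
    exact hardLabel_disj hst a b b' e he1 he2
  subst detF
  have h3 : Sum.inl (2 : Fin 3) ∈ F.label (j, HTag.ts) x := trans_single hm2
  rw [hardPGraph_label] at h3
  exact notL_ts j x h3

end Final
/-- the graph `G` (whose edges are listed as `{src j, tgt j}`,
`j = 1, …, n`) admits a proper 3-coloring if and only if there is a set `K` with
`|K| ≤ 3` and an observation map `h : V(G) → P(K) ∖ {∅}` that is non-destructive
on the p-graph `hardPGraph n hn src tgt` built from that listing. -/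
theorem three_colorable_iff_nondestructive_map
    {Vt : Type} [Fintype Vt] [DecidableEq Vt]
    (G : SimpleGraph Vt) (n : ℕ) (hn : 0 < n) (src tgt : Fin n → Vt)
    (hadj : ∀ j : Fin n, G.Adj (src j) (tgt j))
    (hsurj : ∀ a b : Vt, G.Adj a b →
      ∃ j : Fin n, (src j = a ∧ tgt j = b) ∨ (src j = b ∧ tgt j = a))
    (hinj : Function.Injective fun j : Fin n => s(src j, tgt j)) :
    (∃ c : Vt → Fin 3, ∀ a b : Vt, G.Adj a b → c a ≠ c b) ↔
      ∃ (K : Type) (_ : Fintype K), Fintype.card K ≤ 3 ∧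
        ∃ h : Vt → Set K, (∀ y : Vt, (h y).Nonempty) ∧
          ObsNonDestructive (hardPGraph n hn src tgt) h := by
  constructor
  · rintro ⟨c, hc⟩
    refine ⟨Fin 3, inferInstance, by simp, fun y => {c y}, fun y => ⟨c y, rfl⟩, ?_⟩
    exact hard_nondestructive n hn src tgt c (fun j => hc _ _ (hadj j))
  · rintro ⟨K, fK, hcard, h, hne, hnd⟩
    have hst : ∀ j, src j ≠ tgt j := fun j => (hadj j).ne
    obtain ⟨emb⟩ : Nonempty (K ↪ Fin 3) :=
      Function.Embedding.nonempty_of_card_le (by simpa using hcard)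
    choose d hd using hne
    refine ⟨fun y => emb (d y), ?_⟩
    intro a b hab hEq
    have hde : d a = d b := emb.injective hEq
    obtain ⟨j, hj | hj⟩ := hsurj a b hab
    · exact hard_disjoint hn hst h (fun y => ⟨d y, hd y⟩) hnd j (d a)
        (by rw [hj.1]; exact hd a) (by rw [hj.2, hde]; exact hd b)
    · exact hard_disjoint hn hst h (fun y => ⟨d y, hd y⟩) hnd j (d a)
        (by rw [hj.1, hde]; exact hd b) (by rw [hj.2]; exact hd a)
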